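/- For p > 1, define h(p) = p/(p−1) + ((p+1)/(p−1))·(√(2p/(p+1)) + √(2p/(p+1) − √(2p/(p+1))) − 1/2). Then h is strictly decreasing on (1, ∞). -/
import Mathlib

noncomputable def h (p : ℝ) : ℝ :=
  p / (p - 1) + ((p + 1) / (p - 1)) *
    (Real.sqrt (2 * p / (p + 1)) +
      Real.sqrt (2 * p / (p + 1) - Real.sqrt (2 * p / (p + 1))) - 1 / 2)

lemma G_mono (a b : ℝ) (ha : 1 < a) (hab : a < b) :
    Real.sqrt (a^2+a) + Real.sqrt (a^2+a - a*Real.sqrt (a^2+a)) <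
    Real.sqrt (b^2+b) + Real.sqrt (b^2+b - b*Real.sqrt (b^2+b)) := by
  have ha0 : (0:ℝ) < a := by linarith
  have hb0 : (0:ℝ) < b := by linarith
  set ua := Real.sqrt (a^2+a) with hua
  set ub := Real.sqrt (b^2+b) with hub
  have haa : (0:ℝ) ≤ a^2+a := by positivity
  have hbb : (0:ℝ) ≤ b^2+b := by positivity
  have hua2 : ua^2 = a^2+a := Real.sq_sqrt haa
  have hub2 : ub^2 = b^2+b := Real.sq_sqrt hbb
  have huab : ua < ub := Real.sqrt_lt_sqrt haa (by nlinarith)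
  have hua_gt : a < ua := by
    have : Real.sqrt (a^2) < ua := Real.sqrt_lt_sqrt (by positivity) (by linarith)
    rwa [Real.sqrt_sq ha0.le] at this
  have hub_gt : b < ub := by
    have : Real.sqrt (b^2) < ub := Real.sqrt_lt_sqrt (by positivity) (by linarith)
    rwa [Real.sqrt_sq hb0.le] at this
  have hua0 : (0:ℝ) < ua := lt_trans ha0 hua_gt
  have hub0 : (0:ℝ) < ub := lt_trans hb0 hub_gt
  -- key: a*ub < b*ua
  have hkey : a*ub < b*ua := by
    have h2 : (a*ub)^2 < (b*ua)^2 := by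
      nlinarith [hua2, hub2, mul_pos (mul_pos ha0 hb0) (sub_pos.mpr hab)]
    exact lt_of_pow_lt_pow_left₀ 2 (by positivity) h2
  -- hence ua - a < ub - b
  have hdiff : ua - a < ub - b := by
    have e1 : (ua - a)*(ua + a) = a := by nlinarith
    have e2 : (ub - b)*(ub + b) = b := by nlinarith
    nlinarith [mul_pos (add_pos hua0 ha0) (add_pos hub0 hb0)]
  have hprod : ua*(ua - a) < ub*(ub - b) := by
    apply mul_lt_mul'' huab hdiff hua0.le (by linarith)
  have hrw1 : a^2+a - a*ua = ua*(ua-a) := by nlinarith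
  have hrw2 : b^2+b - b*ub = ub*(ub-b) := by nlinarith
  have hs : Real.sqrt (a^2+a - a*ua) < Real.sqrt (b^2+b - b*ub) := by
    rw [hrw1, hrw2]
    exact Real.sqrt_lt_sqrt (by nlinarith) hprod
  linarith

lemma h_eq (p : ℝ) (hp : 1 < p) :
    h p = 1/2 + Real.sqrt (((p+1)/(p-1))^2 + (p+1)/(p-1)) +
      Real.sqrt (((p+1)/(p-1))^2 + (p+1)/(p-1)
        - ((p+1)/(p-1)) * Real.sqrt (((p+1)/(p-1))^2 + (p+1)/(p-1))) := by
  have hp1 : (0:ℝ) < p - 1 := by linarith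
  have hp2 : (0:ℝ) < p + 1 := by linarith
  set x := (p+1)/(p-1) with hx
  have hx0 : (0:ℝ) < x := by positivity
  have h1 : p - 1 ≠ 0 := hp1.ne'
  have h2 : p + 1 ≠ 0 := hp2.ne'
  have hxx : x^2 + x = x^2 * (2*p/(p+1)) := by rw [hx]; field_simp; ring
  have hA : x * Real.sqrt (2*p/(p+1)) = Real.sqrt (x^2 + x) := by
    rw [hxx, Real.sqrt_mul (by positivity), Real.sqrt_sq hx0.le]
  have hB : x * Real.sqrt (2*p/(p+1) - Real.sqrt (2*p/(p+1))) =
      Real.sqrt (x^2 + x - x * Real.sqrt (x^2+x)) := by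
    rw [show x^2 + x - x * Real.sqrt (x^2+x)
        = x^2 * (2*p/(p+1) - Real.sqrt (2*p/(p+1))) by
        rw [mul_sub, ← hxx, ← hA]; ring,
      Real.sqrt_mul (by positivity), Real.sqrt_sq hx0.le]
  have hC : p/(p-1) - x/2 = 1/2 := by rw [hx]; field_simp; ring
  unfold h
  rw [← hx]
  rw [mul_sub, mul_add, hA, hB]
  linarith

theorem h_strictAnti : StrictAntiOn h (Set.Ioi (1 : ℝ)) := by
  intro p hp q hq hpq
  simp only [Set.mem_Ioi] at hp hq
  rw [h_eq p hp, h_eq q hq]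
  have hx : (q+1)/(q-1) < (p+1)/(p-1) := by
    rw [div_lt_div_iff₀ (by linarith) (by linarith)]; nlinarith
  have hx1 : 1 < (q+1)/(q-1) := by
    rw [lt_div_iff₀ (by linarith)]; linarith
  have := G_mono _ _ hx1 hx
  linarith
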